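/- Let R be a commutative ring, equip the free algebra R⟨X₁,…,Xₙ⟩ with a weight ℕ-gradation determined by positive integer degrees deg Xᵢ = nᵢ, let ≺ be an ℕ-graded monomial ordering on the standard monomial basis B, and let G be a monic Gröbner basis of the ideal I = ⟨G⟩. If the monomial algebra R⟨X₁,…,Xₙ⟩/⟨LM(G)⟩ is von Neumann regular (for every element a there exists x with a·x·a = a), then both R⟨X₁,…,Xₙ⟩/⟨LH(G)⟩ and A = R⟨X₁,…,Xₙ⟩/I are von Neumann regular. -/

import Mathlib

noncomputable section
open MonoidAlgebra
open scoped Classical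

/-- Words in the alphabet `X_1, ..., X_n`: the standard monomial basis `B`. -/
abbrev Word (n : ℕ) : Type := FreeMonoid (Fin n)

/-- The free `R`-algebra `R⟨X_1, ..., X_n⟩`, realized as the monoid algebra of the
free monoid on `n` letters over `R`. -/
abbrev FreeAlg (R : Type) [CommRing R] (n : ℕ) : Type := MonoidAlgebra R (Word n)

variable {R : Type} [CommRing R] {n : ℕ}

/-- The monomial (word) `w` viewed as an element of the free algebra. -/
def mono (R : Type) [CommRing R] {n : ℕ} (w : Word n) : FreeAlg R n :=
  MonoidAlgebra.of R (Word n) w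

/-- A monomial ordering: a well-ordering on words compatible with two-sided multiplication. -/
def IsMonomialOrder (n : ℕ) [LinearOrder (Word n)] : Prop :=
  WellFoundedLT (Word n) ∧ ∀ w u v s : Word n, u < v → w * u * s < w * v * s

/-- The leading monomial of `f` (with junk value `1` for `f = 0`). -/
def LMon [LinearOrder (Word n)] (f : FreeAlg R n) : Word n :=
  if h : f = 0 then 1 else f.coeff.support.max' (Finsupp.support_nonempty_iff.mpr (mt MonoidAlgebra.coeff_eq_zero.mp h))

/-- The leading coefficient of `f`. -/
def LCoef [LinearOrder (Word n)] (f : FreeAlg R n) : R := f.coeff (LMon f)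

/-- `f` is monic: it is nonzero and its leading coefficient is `1`. -/
def IsMonic [LinearOrder (Word n)] (f : FreeAlg R n) : Prop := f ≠ 0 ∧ LCoef f = 1

/-- `v` divides `u` as words: `u = w * v * s` for some words `w, s`. -/
def MDvd {n : ℕ} (v u : Word n) : Prop := ∃ w s : Word n, u = w * v * s

/-- `G` is a monic Gröbner basis of the two-sided ideal `I`: every element of `G` is monic,
and the leading monomial of every nonzero element of `I` is divisible by the leading
monomial of some element of `G`. -/
def IsMonicGB [LinearOrder (Word n)] (G : Set (FreeAlg R n))
    (I : TwoSidedIdeal (FreeAlg R n)) : Prop :=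
  (∀ g ∈ G, IsMonic g) ∧ ∀ f ∈ I, f ≠ 0 → ∃ g ∈ G, MDvd (LMon g) (LMon f)

/-- The set `LM(S)` of leading monomials of the nonzero elements of `S`. -/
def LMset [LinearOrder (Word n)] (S : Set (FreeAlg R n)) : Set (Word n) :=
  {w | ∃ f ∈ S, f ≠ 0 ∧ LMon f = w}

/-- The weight degree of a word, for the weights `deg Xᵢ = d i`. -/
def wdeg {n : ℕ} (d : Fin n → ℕ) (w : Word n) : ℕ := ((FreeMonoid.toList w).map d).sum

/-- The maximal weight degree occurring in `f`. -/
def maxdeg (d : Fin n → ℕ) (f : FreeAlg R n) : ℕ := f.coeff.support.sup (wdeg d)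

/-- The ℕ-leading homogeneous element `LH(f)` of `f`: the sum of the terms of `f` of
maximal weight degree. -/
def LH (d : Fin n → ℕ) (f : FreeAlg R n) : FreeAlg R n :=
  ∑ w ∈ f.coeff.support.filter (fun w => wdeg d w = maxdeg d f), MonoidAlgebra.single w (f.coeff w)

/-- The set `LH(S)` of leading homogeneous elements of the nonzero elements of `S`. -/
def LHset (d : Fin n → ℕ) (S : Set (FreeAlg R n)) : Set (FreeAlg R n) :=
  {x | ∃ f ∈ S, f ≠ 0 ∧ x = LH d f}

/-- An ℕ-graded monomial ordering with respect to the weights `d`: a monomial ordering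
such that words of smaller degree are smaller. -/
def IsGradedMonomialOrder {n : ℕ} (d : Fin n → ℕ) [LinearOrder (Word n)] : Prop :=
  IsMonomialOrder n ∧ ∀ u v : Word n, wdeg d u < wdeg d v → u < v

/-- The quotient ring of the free algebra by a two-sided ideal. -/
abbrev QuotRing (I : TwoSidedIdeal (FreeAlg R n)) : Type := I.ringCon.Quotient
section Aux
set_option linter.unusedSectionVars false

open Finsupp

variable {R : Type} [CommRing R] {n : ℕ} [LinearOrder (Word n)]

lemma wdeg_one (d : Fin n → ℕ) : wdeg d (1 : Word n) = 0 := rfl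

lemma wdeg_mul (d : Fin n → ℕ) (u v : Word n) :
    wdeg d (u * v) = wdeg d u + wdeg d v := by
  simp [wdeg, FreeMonoid.toList_mul]

lemma wdeg_pos (d : Fin n → ℕ) (hd : ∀ i, 0 < d i) {w : Word n} (hw : w ≠ 1) :
    0 < wdeg d w := by
  unfold wdeg
  cases hl : FreeMonoid.toList w with
  | nil =>
      exact absurd (FreeMonoid.toList.injective (by rw [hl]; rfl)) hw
  | cons a l =>
      simp only [List.map_cons, List.sum_cons]
      exact Nat.lt_of_lt_of_le (hd a) (Nat.le_add_right _ _)

lemma word_one_le (d : Fin n → ℕ) (hd : ∀ i, 0 < d i)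
    (hord : IsGradedMonomialOrder d) (w : Word n) : 1 ≤ w := by
  rcases eq_or_ne w 1 with rfl | hw
  · exact le_refl _
  · exact le_of_lt (hord.2 1 w (by simpa [wdeg_one] using wdeg_pos d hd hw))

lemma word_mul_le (d : Fin n → ℕ) (hord : IsGradedMonomialOrder d)
    {t m : Word n} (h : t ≤ m) (u v : Word n) : u * t * v ≤ u * m * v := by
  rcases lt_or_eq_of_le h with h | rfl
  · exact (hord.1.2 u t m v h).le
  · exact le_refl _

lemma mdvd_one {m : Word n} (h : MDvd m (1 : Word n)) : m = 1 := by
  obtain ⟨u, v, huv⟩ := h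
  have : FreeMonoid.toList (u * m * v) = FreeMonoid.toList (1 : Word n) := by rw [← huv]
  simp only [FreeMonoid.toList_mul, FreeMonoid.toList_one, List.append_eq_nil_iff] at this
  exact FreeMonoid.toList.injective (by rw [this.1.2]; rfl)

lemma mdvd_mul_left {m v : Word n} (a : Word n) (h : MDvd m v) : MDvd m (a * v) := by
  obtain ⟨u, s, rfl⟩ := h
  exact ⟨a * u, s, by rw [mul_assoc a u m, mul_assoc a (u * m) s]⟩

lemma mdvd_mul_right {m v : Word n} (a : Word n) (h : MDvd m v) : MDvd m (v * a) := by
  obtain ⟨u, s, rfl⟩ := h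
  exact ⟨u, s * a, by rw [mul_assoc (u*m) s a]⟩

lemma LMon_mem {f : FreeAlg R n} (hf : f ≠ 0) : LMon f ∈ f.coeff.support := by
  rw [LMon, dif_neg hf]; exact Finset.max'_mem _ _

lemma le_LMon {f : FreeAlg R n} (hf : f ≠ 0) {w : Word n} (hw : w ∈ f.coeff.support) :
    w ≤ LMon f := by
  rw [LMon, dif_neg hf]; exact Finset.le_max' _ _ hw

lemma LCoef_ne_zero {f : FreeAlg R n} (hf : f ≠ 0) : LCoef f ≠ 0 := by
  have := LMon_mem hf
  rwa [Finsupp.mem_support_iff] at this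

lemma LMon_single {w : Word n} {c : R} (hc : c ≠ 0) :
    LMon (MonoidAlgebra.single w c : FreeAlg R n) = w := by
  have h0 : (MonoidAlgebra.single w c : FreeAlg R n) ≠ 0 := by
    simpa using hc
  rw [LMon, dif_neg h0]
  have : (MonoidAlgebra.single w c : FreeAlg R n).coeff.support = {w} :=
    Finsupp.support_single_ne_zero _ hc
  simp [this, Finsupp.support_single_ne_zero _ hc]

lemma mono_eq_single (w : Word n) :
    mono R w = MonoidAlgebra.single w (1 : R) := rfl

end Aux
section Aux2
set_option linter.unusedSectionVars false

open Finsupp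

variable {R : Type} [CommRing R] {n : ℕ} [LinearOrder (Word n)]

lemma conj_apply (h : FreeAlg R n) (u v t : Word n) :
    ((MonoidAlgebra.single u (1:R) * h * MonoidAlgebra.single v 1 : FreeAlg R n)).coeff (u * t * v) = h.coeff t := by
  have h1 : ∀ a : Word n, a * v = u * t * v ↔ a = u * t :=
    fun a => ⟨fun e => mul_right_cancel (by rw [e, mul_assoc]), fun e => by rw [e, mul_assoc]⟩
  have h2 : ∀ a : Word n, u * a = u * t ↔ a = t :=
    fun a => ⟨fun e => mul_left_cancel e, fun e => by rw [e]⟩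
  rw [MonoidAlgebra.coeff_mul_single_eq_coeff_mul _ (fun a _ => h1 a),
    MonoidAlgebra.coeff_single_mul_eq_mul_coeff _ (fun a _ => h2 a)]
  ring

lemma conj_support (h : FreeAlg R n) (u v : Word n) :
    (MonoidAlgebra.single u (1:R) * h * MonoidAlgebra.single v 1).coeff.support ⊆
      h.coeff.support.image (fun t => u * t * v) := by
  classical
  intro w hw
  have h1 := MonoidAlgebra.support_coeff_mul_single_subset
    (MonoidAlgebra.single u (1:R) * h) (1:R) v hw
  obtain ⟨b, hb, rfl⟩ := Finset.mem_image.mp h1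
  have h2 := MonoidAlgebra.support_coeff_single_mul_subset h (1:R) u hb
  obtain ⟨t, ht, rfl⟩ := Finset.mem_image.mp h2
  exact Finset.mem_image.mpr ⟨t, ht, rfl⟩

/-- The monomial ideal of elements supported on words divisible by `M`. -/
def divIdeal (M : Set (Word n)) : TwoSidedIdeal (FreeAlg R n) :=
  TwoSidedIdeal.mk' {f | ∀ v ∈ f.coeff.support, ∃ m ∈ M, MDvd m v}
    (by simp)
    (by
      intro x y hx hy v hv
      rcases Finset.mem_union.mp (Finsupp.support_add (g₁ := x.coeff) (g₂ := y.coeff) hv) with h | h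
      · exact hx v h
      · exact hy v h)
    (by intro x hx v hv; exact hx v (by rw [MonoidAlgebra.coeff_neg, Finsupp.support_neg] at hv; exact hv))
    (by
      classical
      intro x y hy v hv
      have := MonoidAlgebra.support_coeff_mul_subset x y hv
      obtain ⟨a, _, b, hb, rfl⟩ := Finset.mem_mul.mp this
      obtain ⟨m, hm, hdvd⟩ := hy b hb
      exact ⟨m, hm, mdvd_mul_left a hdvd⟩)
    (by
      classical
      intro x y hx v hv
      have := MonoidAlgebra.support_coeff_mul_subset x y hv
      obtain ⟨a, ha, b, _, rfl⟩ := Finset.mem_mul.mp this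
      obtain ⟨m, hm, hdvd⟩ := hx a ha
      exact ⟨m, hm, mdvd_mul_right b hdvd⟩)

lemma mem_divIdeal {M : Set (Word n)} {f : FreeAlg R n} :
    f ∈ divIdeal M ↔ ∀ v ∈ f.coeff.support, ∃ m ∈ M, MDvd m v :=
  TwoSidedIdeal.mem_mk' _ _ _ _ _ _ _

lemma LH_apply (d : Fin n → ℕ) (f : FreeAlg R n) (w : Word n) :
    (LH d f).coeff w = if wdeg d w = maxdeg d f then f.coeff w else 0 := by
  classical
  rw [LH, MonoidAlgebra.coeff_sum, Finset.sum_apply']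
  simp only [MonoidAlgebra.coeff_single, Finsupp.single_apply]
  rw [Finset.sum_ite_eq' _ w (fun w' => f.coeff w')]
  by_cases hw : w ∈ f.coeff.support
  · simp [Finset.mem_filter, hw]
  · simp [Finset.mem_filter, hw, Finsupp.notMem_support_iff.mp hw]

lemma maxdeg_eq (d : Fin n → ℕ) (hord : IsGradedMonomialOrder d)
    {f : FreeAlg R n} (hf : f ≠ 0) : maxdeg d f = wdeg d (LMon f) := by
  refine le_antisymm (Finset.sup_le fun t ht => ?_) (Finset.le_sup (LMon_mem hf))
  by_contra hlt
  exact absurd (hord.2 _ _ (lt_of_not_ge hlt)) (not_lt_of_ge (le_LMon hf ht))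

lemma LH_LMon_coeff (d : Fin n → ℕ) (hord : IsGradedMonomialOrder d)
    {f : FreeAlg R n} (hf : f ≠ 0) : (LH d f).coeff (LMon f) = LCoef f := by
  rw [LH_apply, maxdeg_eq d hord hf, if_pos rfl]; rfl

lemma LH_support (d : Fin n → ℕ) (f : FreeAlg R n) :
    (LH d f).coeff.support ⊆ f.coeff.support := by
  intro w hw
  have := Finsupp.mem_support_iff.mp hw
  rw [LH_apply] at this
  by_cases h : wdeg d w = maxdeg d f
  · rw [if_pos h] at this; exact Finsupp.mem_support_iff.mpr this
  · rw [if_neg h] at this; exact absurd rfl this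

lemma IsMonic_LH (d : Fin n → ℕ) (hord : IsGradedMonomialOrder d)
    {f : FreeAlg R n} (hf : f ≠ 0) (hm : LCoef f = 1) :
    LH d f ≠ 0 ∧ LMon (LH d f) = LMon f ∧ LCoef (LH d f) = 1 := by
  have hco : (LH d f).coeff (LMon f) = LCoef f := LH_LMon_coeff d hord hf
  have hne : LH d f ≠ 0 := by
    intro h0
    exact LCoef_ne_zero hf (by rw [← hco, h0]; rfl)
  have hmemL : LMon f ∈ (LH d f).coeff.support :=
    Finsupp.mem_support_iff.mpr (by rw [hco]; exact LCoef_ne_zero hf)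
  have hLM : LMon (LH d f) = LMon f :=
    le_antisymm (le_LMon hf (LH_support d f (LMon_mem hne))) (le_LMon hne hmemL)
  exact ⟨hne, hLM, by rw [LCoef, hLM, hco, hm]⟩

end Aux2
section Aux3
set_option linter.unusedSectionVars false
open Finsupp

variable {R : Type} [CommRing R] {n : ℕ} [LinearOrder (Word n)]

lemma single_one_mul (c : R) (q : FreeAlg R n) :
    MonoidAlgebra.single (1 : Word n) c * q = c • q := by
  have h : (MonoidAlgebra.single (1 : Word n) c : FreeAlg R n) = c • 1 := by
    rw [MonoidAlgebra.one_def, MonoidAlgebra.smul_single, smul_eq_mul, mul_one]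
  rw [h, smul_mul_assoc, one_mul]

lemma reduce (d : Fin n → ℕ) (hd : ∀ i, 0 < d i) (hord : IsGradedMonomialOrder d)
    (S : Set (FreeAlg R n)) (hmon : ∀ h ∈ S, IsMonic h)
    (hcov : ∀ w : Word n, w ≠ 1 → ∃ h ∈ S, MDvd (LMon h) w) (f : FreeAlg R n) :
    ∃ r : R, f - MonoidAlgebra.single 1 r ∈ TwoSidedIdeal.span S := by
  classical
  have wf : WellFounded (fun a b : FreeAlg R n => LMon a < LMon b) :=
    InvImage.wf LMon hord.1.1.wf
  refine wf.induction
    (C := fun f => ∃ r : R, f - MonoidAlgebra.single 1 r ∈ TwoSidedIdeal.span S) f ?_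
  clear f
  intro f IH
  have h00 : (MonoidAlgebra.single (1 : Word n) (0 : R) : FreeAlg R n) = 0 :=
    MonoidAlgebra.single_zero 1
  by_cases hf0 : f = 0
  · exact ⟨0, by rw [hf0, h00, sub_zero]; exact (TwoSidedIdeal.span S).zero_mem⟩
  by_cases hone : LMon f = 1
  · refine ⟨f.coeff 1, ?_⟩
    have hs : f = MonoidAlgebra.single 1 (f.coeff 1) := by
      ext w
      rcases eq_or_ne w 1 with rfl | hw
      · rw [MonoidAlgebra.coeff_single, Finsupp.single_eq_same]
      · rw [MonoidAlgebra.coeff_single, Finsupp.single_eq_of_ne' (Ne.symm hw)]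
        by_contra hc
        have hmem : w ∈ f.coeff.support := Finsupp.mem_support_iff.mpr hc
        have hle := le_LMon hf0 hmem
        rw [hone] at hle
        exact hw (le_antisymm hle (word_one_le d hd hord w))
    rw [← hs, sub_self]
    exact (TwoSidedIdeal.span S).zero_mem
  · obtain ⟨h, hhS, u, v, huv⟩ := hcov (LMon f) hone
    obtain ⟨hh0, hhc⟩ := hmon h hhS
    set q : FreeAlg R n := MonoidAlgebra.single u 1 * h * MonoidAlgebra.single v 1 with hq
    have hqmem : q ∈ TwoSidedIdeal.span S := by
      rw [hq, mul_assoc]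
      exact TwoSidedIdeal.mul_mem_left _ _ _
        (TwoSidedIdeal.mul_mem_right _ _ _ (TwoSidedIdeal.subset_span hhS))
    have hqw : q.coeff (LMon f) = 1 := by
      rw [hq, huv, conj_apply]; exact hhc
    have hqsup : ∀ t ∈ q.coeff.support, t ≤ LMon f := by
      intro t ht
      rw [hq] at ht
      obtain ⟨t', ht', rfl⟩ := Finset.mem_image.mp (conj_support h u v ht)
      rw [huv]
      exact word_mul_le d hord (le_LMon hh0 ht') u v
    set c : R := f.coeff (LMon f) with hc
    set f' : FreeAlg R n := f - c • q with hf'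
    have hcq : c • q ∈ TwoSidedIdeal.span S := by
      rw [← single_one_mul]
      exact TwoSidedIdeal.mul_mem_left _ _ _ hqmem
    have hsupp : ∀ t ∈ f'.coeff.support, t < LMon f := by
      intro t ht
      have hle : t ≤ LMon f := by
        rcases Finset.mem_union.mp (Finsupp.support_sub (f := f.coeff) (g := (c • q).coeff) ht) with h1 | h1
        · exact le_LMon hf0 h1
        · exact hqsup t (Finsupp.support_smul (b := c) (g := q.coeff) h1)
      refine lt_of_le_of_ne hle ?_
      intro he
      have hz : f'.coeff (LMon f) = 0 := by
        rw [hf', MonoidAlgebra.coeff_sub, Finsupp.sub_apply, MonoidAlgebra.coeff_smul, Finsupp.smul_apply, hqw, smul_eq_mul, mul_one, ← hc, sub_self]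
      rw [he] at ht
      exact (Finsupp.mem_support_iff.mp ht) hz
    by_cases hf'0 : f' = 0
    · refine ⟨0, ?_⟩
      rw [h00, sub_zero]
      have hfq : f = c • q := by rwa [hf', sub_eq_zero] at hf'0
      rw [hfq]; exact hcq
    · obtain ⟨r, hr⟩ := IH f' (hsupp _ (LMon_mem hf'0))
      refine ⟨r, ?_⟩
      have he : f - MonoidAlgebra.single 1 r = (f' - MonoidAlgebra.single 1 r) + c • q := by
        rw [hf']; abel
      rw [he]
      exact (TwoSidedIdeal.span S).add_mem hr hcq

end Aux3
section Aux4
set_option linter.unusedSectionVars false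
open Finsupp

variable {R : Type} [CommRing R] {n : ℕ} [LinearOrder (Word n)]

lemma quot_eq {I : TwoSidedIdeal (FreeAlg R n)} {f g : FreeAlg R n}
    (h : f - g ∈ I) : (f : QuotRing I) = (g : QuotRing I) :=
  (RingCon.eq I.ringCon).mpr ((I.rel_iff f g).mpr h)

lemma quot_eq' {I : TwoSidedIdeal (FreeAlg R n)} {f g : FreeAlg R n}
    (h : (f : QuotRing I) = (g : QuotRing I)) : f - g ∈ I :=
  (I.rel_iff f g).mp ((RingCon.eq I.ringCon).mp h)

lemma quot_surj {I : TwoSidedIdeal (FreeAlg R n)} (a : QuotRing I) :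
    ∃ f : FreeAlg R n, (f : QuotRing I) = a := by
  obtain ⟨f, hf⟩ := Quotient.exists_rep a
  exact ⟨f, hf⟩

lemma vnr_of_one_mem {I : TwoSidedIdeal (FreeAlg R n)} (h : (1 : FreeAlg R n) ∈ I) :
    ∀ a : QuotRing I, ∃ x, a * x * a = a := by
  have h10 : ((1 : FreeAlg R n) : QuotRing I) = ((0 : FreeAlg R n) : QuotRing I) :=
    quot_eq (by simpa using h)
  rw [RingCon.coe_one, RingCon.coe_zero] at h10
  have : Subsingleton (QuotRing I) := subsingleton_of_zero_eq_one h10.symm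
  exact fun a => ⟨a, Subsingleton.elim _ _⟩

lemma LH_single [Nontrivial R] (d : Fin n → ℕ) {w : Word n} {c : R} (hc : c ≠ 0) :
    LH d (MonoidAlgebra.single w c : FreeAlg R n) = MonoidAlgebra.single w c := by
  classical
  have hsupp : (MonoidAlgebra.single w c : FreeAlg R n).coeff.support = {w} :=
    Finsupp.support_single_ne_zero _ hc
  have hmax : maxdeg d (MonoidAlgebra.single w c : FreeAlg R n) = wdeg d w := by
    rw [maxdeg, hsupp, Finset.sup_singleton]
  rw [LH, hsupp, hmax]
  rw [Finset.filter_singleton, if_pos rfl, Finset.sum_singleton, MonoidAlgebra.coeff_single, Finsupp.single_eq_same]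

end Aux4
/-- If `G` is a monic Gröbner basis of `I = ⟨G⟩` with respect to an
ℕ-graded monomial ordering and the monomial algebra `R⟨X⟩/⟨LM(G)⟩` is von Neumann regular, then so are
`R⟨X⟩/⟨LH(G)⟩` and `A = R⟨X⟩/I`. -/
theorem vonNeumannRegular_lifts [LinearOrder (Word n)]
    (d : Fin n → ℕ) (hd : ∀ i, 0 < d i) (hord : IsGradedMonomialOrder d)
    (G : Set (FreeAlg R n)) (hGB : IsMonicGB G (TwoSidedIdeal.span G))
    (hV : ∀ a : QuotRing (TwoSidedIdeal.span (mono R '' LMset G)), ∃ x, a * x * a = a) :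
    (∀ a : QuotRing (TwoSidedIdeal.span (LHset d G)), ∃ x, a * x * a = a) ∧
    (∀ a : QuotRing (TwoSidedIdeal.span G), ∃ x, a * x * a = a) := by
  classical
  rcases subsingleton_or_nontrivial R with hR | hR
  · -- trivial coefficient ring
    have h1 : (1 : FreeAlg R n) = 0 := by
      ext w; exact Subsingleton.elim _ _
    refine ⟨vnr_of_one_mem (h1 ▸ TwoSidedIdeal.zero_mem _),
      vnr_of_one_mem (h1 ▸ TwoSidedIdeal.zero_mem _)⟩
  -- the unit of the free algebra is nonzero
  have hone0 : (1 : FreeAlg R n) ≠ 0 := by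
    intro h
    rw [MonoidAlgebra.one_def] at h
    exact one_ne_zero (MonoidAlgebra.single_eq_zero.mp h)
  by_cases hcase : ∃ g ∈ G, g ≠ 0 ∧ LMon g = 1
  · -- some element of `G` has leading monomial 1; then `1 ∈ G` and all quotients are trivial
    obtain ⟨g, hgG, hg0, hgLM⟩ := hcase
    have hgmon := hGB.1 g hgG
    have hg1 : g = 1 := by
      have hs : g = MonoidAlgebra.single 1 (g.coeff 1) := by
        ext w
        rcases eq_or_ne w 1 with rfl | hw
        · rw [MonoidAlgebra.coeff_single, Finsupp.single_eq_same]
        · rw [MonoidAlgebra.coeff_single, Finsupp.single_eq_of_ne' (Ne.symm hw)]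
          by_contra hc
          have hmem : w ∈ g.coeff.support := Finsupp.mem_support_iff.mpr hc
          have hle := le_LMon hg0 hmem
          rw [hgLM] at hle
          exact hw (le_antisymm hle (word_one_le d hd hord w))
      have hco : g.coeff 1 = 1 := by
        have := hgmon.2
        rwa [LCoef, hgLM] at this
      rw [hs, hco, ← MonoidAlgebra.one_def]
    have hLH1 : (1 : FreeAlg R n) ∈ LHset d G := by
      refine ⟨g, hgG, hg0, ?_⟩
      rw [hg1, MonoidAlgebra.one_def, LH_single d (one_ne_zero (α := R)), ← MonoidAlgebra.one_def]
    have hLM1 : (1 : FreeAlg R n) ∈ mono R '' LMset G := by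
      refine ⟨1, ⟨g, hgG, hg0, ?_⟩, ?_⟩
      · exact hgLM
      · rw [mono_eq_single, ← MonoidAlgebra.one_def]
    exact ⟨vnr_of_one_mem (TwoSidedIdeal.subset_span hLH1),
      vnr_of_one_mem (TwoSidedIdeal.subset_span (hg1 ▸ hgG))⟩
  · -- main case
    push_neg at hcase
    -- membership in the span of the monomials implies divisibility of every supported word
    have hJK : ∀ {x : FreeAlg R n}, x ∈ TwoSidedIdeal.span (mono R '' LMset G) →
        ∀ v ∈ x.coeff.support, ∃ m ∈ LMset G, MDvd m v := by
      intro x hx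
      have hmem : x ∈ divIdeal (R := R) (LMset G) := by
        refine TwoSidedIdeal.mem_span_iff.mp hx _ ?_
        rintro y ⟨m, hm, rfl⟩
        rw [SetLike.mem_coe, mem_divIdeal]
        intro v hv
        have hvm : v = m := by
          have := Finsupp.support_single_subset (a := m) (b := (1:R)) hv
          simpa using this
        exact ⟨m, hm, hvm ▸ ⟨1, 1, by rw [one_mul, mul_one]⟩⟩
      exact mem_divIdeal.mp hmem
    -- every non-unit word is divisible by a leading monomial of `G`
    have cover : ∀ w : Word n, w ≠ 1 → ∃ m ∈ LMset G, MDvd m w := by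
      intro w hw
      obtain ⟨x, hx⟩ := hV ((mono R w : FreeAlg R n) : QuotRing _)
      obtain ⟨f, rfl⟩ := quot_surj x
      rw [← RingCon.coe_mul, ← RingCon.coe_mul] at hx
      have hg : mono R w * f * mono R w - mono R w ∈
          TwoSidedIdeal.span (mono R '' LMset G) := quot_eq' hx
      have hw0 : 0 < wdeg d w := wdeg_pos d hd hw
      have hnot : w ∉ (mono R w * f * mono R w).coeff.support := by
        intro hmem
        obtain ⟨a, ha, b, hb, hab⟩ :=
          Finset.mem_mul.mp (MonoidAlgebra.support_coeff_mul_subset (mono R w * f) (mono R w) hmem)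
        obtain ⟨a1, ha1, a2, ha2, ha12⟩ :=
          Finset.mem_mul.mp (MonoidAlgebra.support_coeff_mul_subset (mono R w) f ha)
        have hb' : b = w := by
          have := Finsupp.support_single_subset (a := w) (b := (1:R)) hb
          simpa using this
        have ha1' : a1 = w := by
          have := Finsupp.support_single_subset (a := w) (b := (1:R)) ha1
          simpa using this
        have he : wdeg d w = wdeg d w + wdeg d a2 + wdeg d w := by
          conv_lhs => rw [← hab, ← ha12, hb', ha1']
          rw [wdeg_mul, wdeg_mul]
        omega
      have hcoef : (mono R w * f * mono R w - mono R w).coeff w = -1 := by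
        rw [MonoidAlgebra.coeff_sub, Finsupp.sub_apply, Finsupp.notMem_support_iff.mp hnot, mono_eq_single,
            MonoidAlgebra.coeff_single,
          Finsupp.single_eq_same]
        ring
      have hwsup : w ∈ (mono R w * f * mono R w - mono R w).coeff.support :=
        Finsupp.mem_support_iff.mpr (by rw [hcoef]; exact neg_ne_zero.mpr one_ne_zero)
      exact hJK hg w hwsup
    have covG : ∀ w : Word n, w ≠ 1 → ∃ g ∈ G, g ≠ 0 ∧ MDvd (LMon g) w := by
      intro w hw
      obtain ⟨m, ⟨g, hgG, hg0, rfl⟩, hdvd⟩ := cover w hw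
      exact ⟨g, hgG, hg0, hdvd⟩
    have monM : ∀ h ∈ mono R '' LMset G, IsMonic h := by
      rintro _ ⟨m, _, rfl⟩
      rw [mono_eq_single]
      refine ⟨fun h => one_ne_zero (α := R) (MonoidAlgebra.single_eq_zero.mp h), ?_⟩
      rw [LCoef, LMon_single (one_ne_zero (α := R))]
      exact Finsupp.single_eq_same
    have covM : ∀ w : Word n, w ≠ 1 → ∃ h ∈ mono R '' LMset G, MDvd (LMon h) w := by
      intro w hw
      obtain ⟨m, hm, hdvd⟩ := cover w hw
      refine ⟨mono R m, ⟨m, hm, rfl⟩, ?_⟩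
      rw [mono_eq_single, LMon_single (one_ne_zero (α := R))]
      exact hdvd
    -- the coefficient ring is von Neumann regular
    have hRv : ∀ r : R, ∃ s : R, r * s * r = r := by
      intro r
      obtain ⟨x, hx⟩ := hV ((MonoidAlgebra.single 1 r : FreeAlg R n) : QuotRing _)
      obtain ⟨f, rfl⟩ := quot_surj x
      obtain ⟨s, hs⟩ := reduce d hd hord _ monM covM f
      rw [quot_eq hs, ← RingCon.coe_mul, ← RingCon.coe_mul] at hx
      have hmem := quot_eq' hx
      have hprod : MonoidAlgebra.single (1 : Word n) r * MonoidAlgebra.single 1 s *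
          MonoidAlgebra.single 1 r = MonoidAlgebra.single (1 : Word n) (r * s * r) := by
        rw [MonoidAlgebra.single_mul_single, MonoidAlgebra.single_mul_single, one_mul, one_mul]
      rw [hprod, ← MonoidAlgebra.single_sub] at hmem
      by_contra hne
      push_neg at hne
      have hne' : r * s * r - r ≠ 0 := sub_ne_zero.mpr (fun h => (hne s) h)
      have h1sup : (1 : Word n) ∈
          (MonoidAlgebra.single (1 : Word n) (r * s * r - r) : FreeAlg R n).coeff.support := by
        rw [MonoidAlgebra.coeff_single, Finsupp.support_single_ne_zero _ hne']
        exact Finset.mem_singleton_self 1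
      obtain ⟨m, ⟨g, hgG, hg0, hgm⟩, hdvd⟩ := hJK hmem 1 h1sup
      exact hcase g hgG hg0 (by rw [hgm]; exact mdvd_one hdvd)
    -- the generic transfer
    have main : ∀ S : Set (FreeAlg R n), (∀ h ∈ S, IsMonic h) →
        (∀ w : Word n, w ≠ 1 → ∃ h ∈ S, MDvd (LMon h) w) →
        ∀ a : QuotRing (TwoSidedIdeal.span S), ∃ x, a * x * a = a := by
      intro S hmon hcov a
      obtain ⟨f, rfl⟩ := quot_surj a
      obtain ⟨r, hr⟩ := reduce d hd hord S hmon hcov f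
      obtain ⟨s, hs⟩ := hRv r
      refine ⟨((MonoidAlgebra.single 1 s : FreeAlg R n) : QuotRing (TwoSidedIdeal.span S)), ?_⟩
      rw [quot_eq hr, ← RingCon.coe_mul, ← RingCon.coe_mul, MonoidAlgebra.single_mul_single,
        MonoidAlgebra.single_mul_single, one_mul, one_mul, hs]
    refine ⟨main _ ?_ ?_, main _ hGB.1 ?_⟩
    · rintro _ ⟨g, hgG, hg0, rfl⟩
      obtain ⟨hne, _, hLC⟩ := IsMonic_LH d hord hg0 (hGB.1 g hgG).2
      exact ⟨hne, hLC⟩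
    · intro w hw
      obtain ⟨g, hgG, hg0, hdvd⟩ := covG w hw
      obtain ⟨hne, hLM, _⟩ := IsMonic_LH d hord hg0 (hGB.1 g hgG).2
      refine ⟨LH d g, ⟨g, hgG, hg0, rfl⟩, ?_⟩
      rw [hLM]
      exact hdvd
    · intro w hw
      obtain ⟨g, hgG, _, hdvd⟩ := covG w hw
      exact ⟨g, hgG, hdvd⟩
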